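/- Let f : ℝ → ℂ be a Schwartz function, let a, b, c, d, τ, η ∈ ℝ with b ≠ 0 and ad − bc = 1, let p be a natural number and ξ_m ∈ ℝ. Set g(t) = e^{i(a/(2b))t²} f(t) and σ_m = (ξ_m − τ)/(2πb). Then ∫_ℝ (ξ − ξ_m)^{2p} |O_f^J(ξ)|² dξ = (2πb)^{2p} ∫_ℝ (σ − σ_m)^{2p} |ĝ(σ)|² dσ. -/

import Mathlib

open MeasureTheory Real
open scoped FourierTransform

/-- The offset linear canonical transform (OLCT) with parameters `a, b, d, τ, η` (up to the
unimodular constant of the kernel, which does not affect the modulus). -/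
noncomputable def OLCT (a b d τ η : ℝ) (f : ℝ → ℂ) (ξ : ℝ) : ℂ :=
  ((Real.sqrt (2 * π * |b|))⁻¹ : ℝ) *
    ∫ t : ℝ, f t * Complex.exp (Complex.I *
      (((a / (2 * b)) * t ^ 2 - (1 / b) * t * (ξ - τ) - (1 / b) * ξ * (d * τ - b * η)
        + (d / (2 * b)) * (ξ ^ 2 + τ ^ 2) : ℝ) : ℂ))

lemma norm_olct_sq (f : ℝ → ℂ) (a b d τ η : ℝ) (hb : b ≠ 0) (ξ : ℝ) :
    ‖OLCT a b d τ η f ξ‖ ^ 2 =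
      (2 * π * |b|)⁻¹ *
        ‖𝓕 (fun u : ℝ => Complex.exp (Complex.I * ((a / (2 * b) : ℝ) : ℂ) * (u : ℂ) ^ 2) * f u)
          ((ξ - τ) / (2 * π * b))‖ ^ 2 := by
  have hπ : (π : ℝ) ≠ 0 := Real.pi_ne_zero
  set C : ℝ := -(1 / b) * ξ * (d * τ - b * η) + (d / (2 * b)) * (ξ ^ 2 + τ ^ 2) with hC
  have key : (∫ t : ℝ, f t * Complex.exp (Complex.I *
        (((a / (2 * b)) * t ^ 2 - (1 / b) * t * (ξ - τ) - (1 / b) * ξ * (d * τ - b * η)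
          + (d / (2 * b)) * (ξ ^ 2 + τ ^ 2) : ℝ) : ℂ))) =
      Complex.exp ((C : ℂ) * Complex.I) *
        𝓕 (fun u : ℝ => Complex.exp (Complex.I * ((a / (2 * b) : ℝ) : ℂ) * (u : ℂ) ^ 2) * f u)
          ((ξ - τ) / (2 * π * b)) := by
    rw [Real.fourier_real_eq_integral_exp_smul, ← MeasureTheory.integral_const_mul]
    congr 1
    ext t
    have h2 : (-2 * π * t * ((ξ - τ) / (2 * π * b)) : ℝ) = -((1 / b) * t * (ξ - τ)) := by
      field_simp
    have hexp : Complex.I *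
        (((a / (2 * b)) * t ^ 2 - (1 / b) * t * (ξ - τ) - (1 / b) * ξ * (d * τ - b * η)
          + (d / (2 * b)) * (ξ ^ 2 + τ ^ 2) : ℝ) : ℂ) =
        (C : ℂ) * Complex.I + (((-2 * π * t * ((ξ - τ) / (2 * π * b)) : ℝ) : ℂ) * Complex.I
          + Complex.I * ((a / (2 * b) : ℝ) : ℂ) * (t : ℂ) ^ 2) := by
      rw [h2, hC]
      push_cast
      ring
    rw [hexp, Complex.exp_add, Complex.exp_add, smul_eq_mul]
    ring
  rw [OLCT, key]
  rw [norm_mul, norm_mul, Complex.norm_exp_ofReal_mul_I, one_mul, Complex.norm_real,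
    Real.norm_eq_abs]
  have h0 : (0 : ℝ) ≤ 2 * π * |b| := by positivity
  rw [abs_of_nonneg (by positivity), mul_pow, inv_pow, Real.sq_sqrt h0]

theorem integral_comp_div_sub (H : ℝ → ℝ) (r τ : ℝ) :
    (∫ ξ : ℝ, H ((ξ - τ) / r)) = |r| • ∫ σ : ℝ, H σ := by
  have h1 : (∫ ξ : ℝ, H ((ξ - τ) / r)) = ∫ ξ : ℝ, (fun x => H (x * r⁻¹)) (ξ - τ) := by
    simp_rw [div_eq_mul_inv]
  rw [h1, MeasureTheory.integral_sub_right_eq_self (fun x => H (x * r⁻¹)) τ,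
    MeasureTheory.Measure.integral_comp_inv_mul_right H r]

/-- **Change-of-variables identity (equation (16)).** With `g(t) = e^{i(a/(2b))t²} f(t)` and
`σₘ = (ξₘ − τ)/(2πb)`,
`∫ (ξ − ξₘ)^{2p} |O_f^J(ξ)|² dξ = (2πb)^{2p} ∫ (σ − σₘ)^{2p} |ĝ(σ)|² dσ`. -/
theorem olct_moment_eq_fourier_moment (f : SchwartzMap ℝ ℂ) (a b c d τ η : ℝ)
    (hb : b ≠ 0) (hdet : a * d - b * c = 1) (p : ℕ) (ξm : ℝ) :
    ∫ ξ : ℝ, (ξ - ξm) ^ (2 * p) * ‖OLCT a b d τ η (⇑f) ξ‖ ^ 2 =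
      (2 * π * b) ^ (2 * p) *
        ∫ σ : ℝ, (σ - (ξm - τ) / (2 * π * b)) ^ (2 * p) *
          ‖𝓕 (fun u : ℝ => Complex.exp (Complex.I * ((a / (2 * b) : ℝ) : ℂ) * (u : ℂ) ^ 2) * f u) σ‖ ^ 2 := by
  have hπ : (π : ℝ) ≠ 0 := Real.pi_ne_zero
  have hr : (2 * π * b : ℝ) ≠ 0 := by positivity
  set G : ℝ → ℝ := fun σ =>
    ‖𝓕 (fun u : ℝ => Complex.exp (Complex.I * ((a / (2 * b) : ℝ) : ℂ) * (u : ℂ) ^ 2) * f u) σ‖ ^ 2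
    with hG
  set H : ℝ → ℝ := fun σ => (2 * π * b * σ + τ - ξm) ^ (2 * p) * ((2 * π * |b|)⁻¹ * G σ) with hH
  have step1 : (∫ ξ : ℝ, (ξ - ξm) ^ (2 * p) * ‖OLCT a b d τ η (⇑f) ξ‖ ^ 2) =
      ∫ ξ : ℝ, H ((ξ - τ) / (2 * π * b)) := by
    congr 1
    ext ξ
    rw [norm_olct_sq (⇑f) a b d τ η hb ξ]
    simp only [hH, hG]
    have : 2 * π * b * ((ξ - τ) / (2 * π * b)) + τ - ξm = ξ - ξm := by
      field_simp
      ring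
    rw [this]
  rw [step1, integral_comp_div_sub H (2 * π * b) τ]
  have hH2 : ∀ σ : ℝ, H σ =
      (2 * π * b) ^ (2 * p) * (2 * π * |b|)⁻¹ *
        ((σ - (ξm - τ) / (2 * π * b)) ^ (2 * p) * G σ) := by
    intro σ
    simp only [hH]
    have : 2 * π * b * σ + τ - ξm = 2 * π * b * (σ - (ξm - τ) / (2 * π * b)) := by
      field_simp
      ring
    rw [this, mul_pow]
    ring
  simp_rw [hH2]
  rw [MeasureTheory.integral_const_mul, smul_eq_mul]
  simp only [hG]
  have habs : |2 * π * b| = 2 * π * |b| := by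
    rw [abs_mul, abs_of_pos Real.two_pi_pos]
  rw [habs]
  have hne : (2 * π * |b| : ℝ) ≠ 0 := by positivity
  field_simp
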